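/- For all i < j in A and all words u, v ∈ A*, if u ≡_hypo v then φ_ij(u) = φ_ij(v). Consequently φ_ij factors through the quotient to give a monoid homomorphism from hypo to hypo_2. -/

import Mathlib

open FreeMonoid

/-- The alphabet `A = {1 < 2 < 3 < ...}` of positive integers. -/
abbrev Alph : Type := ℕ+

/-- The finite alphabet `A_n = {1 < ... < n}`. -/
abbrev AlphN (n : ℕ) : Type := {a : ℕ+ // (a : ℕ) ≤ n}

/-- The defining relations of the hypoplactic monoid. -/
def HypoRel (u v : FreeMonoid Alph) : Prop :=
  (∃ a b c : Alph, a ≤ b ∧ b < c ∧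
      u = of a * of c * of b ∧ v = of c * of a * of b) ∨
  (∃ a b c : Alph, a < b ∧ b ≤ c ∧
      u = of b * of a * of c ∧ v = of b * of c * of a) ∨
  (∃ a b c d : Alph, a ≤ b ∧ b < c ∧ c ≤ d ∧
      u = of c * of a * of d * of b ∧ v = of a * of c * of b * of d) ∨
  (∃ a b c d : Alph, a < b ∧ b ≤ c ∧ c < d ∧
      u = of b * of d * of a * of c ∧ v = of d * of b * of c * of a)

/-- The hypoplactic congruence on `A*`: the congruence generated by `HypoRel`. -/
def hypoCon : Con (FreeMonoid Alph) := conGen HypoRel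

/-- The infinite-rank hypoplactic monoid `hypo`. -/
abbrev Hypo : Type := hypoCon.Quotient

/-- The inclusion of `A_n*` into `A*`. -/
def inclN (n : ℕ) : FreeMonoid (AlphN n) →* FreeMonoid Alph :=
  FreeMonoid.map Subtype.val

/-- The hypoplactic congruence restricted to `A_n*`. -/
def hypoConN (n : ℕ) : Con (FreeMonoid (AlphN n)) :=
  hypoCon.comap (inclN n) (fun x y => map_mul (inclN n) x y)

/-- The rank-`n` hypoplactic monoid `hypo_n`. -/
abbrev HypoN (n : ℕ) : Type := (hypoConN n).Quotient

/-- The letter `1` of `A_2`. -/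
def a1 : AlphN 2 := ⟨1, by norm_num⟩

/-- The letter `2` of `A_2`. -/
def a2 : AlphN 2 := ⟨2, by norm_num⟩

/-- The homomorphism `φ_{ij} : A* → hypo_2`, sending `i ↦ [1]`, `j ↦ [2]`,
`a ↦ [21]` for `i < a < j`, and every other letter to the identity. -/
def phi (i j : Alph) : FreeMonoid Alph →* HypoN 2 :=
  FreeMonoid.lift fun a =>
    if a = i then (hypoConN 2).mk' (of a1)
    else if a = j then (hypoConN 2).mk' (of a2)
    else if i < a ∧ a < j then (hypoConN 2).mk' (of a2 * of a1)
    else 1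

/-- A monoid `M` satisfies the identity `u ≈ v` (over the alphabet of variables `X`)
if every homomorphic evaluation of the two words in `M` gives equal values. -/
def MSatisfies (M : Type*) [Monoid M] {X : Type*} (u v : FreeMonoid X) : Prop :=
  ∀ ψ : FreeMonoid X →* M, ψ u = ψ v

/-- An identity `u ≈ v` is balanced if every variable occurs the same number of
times in `u` as in `v`. -/
def IsBalanced {X : Type*} [DecidableEq X] (u v : FreeMonoid X) : Prop :=
  ∀ x : X, u.toList.count x = v.toList.count x

namespace PhiAux


def X : HypoN 2 := (hypoConN 2).mk' (of a1)
def Y : HypoN 2 := (hypoConN 2).mk' (of a2)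

lemma mkrel {u v : FreeMonoid (AlphN 2)} (h : hypoCon (inclN 2 u) (inclN 2 v)) :
    (hypoConN 2).mk' u = (hypoConN 2).mk' v :=
  (Con.eq _).mpr ((Con.comap_rel _).mpr h)

lemma incl_a1 : inclN 2 (of a1) = of (1 : ℕ+) := rfl
lemma incl_a2 : inclN 2 (of a2) = of (2 : ℕ+) := rfl

lemma B1 : X * Y * X = Y * X * X := by
  rw [X, Y, ← map_mul, ← map_mul, ← map_mul, ← map_mul]
  apply mkrel
  simp only [map_mul, incl_a1, incl_a2]
  exact ConGen.Rel.of _ _ (Or.inl ⟨1, 1, 2, le_refl _, by decide, rfl, rfl⟩)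

lemma B2 : Y * X * Y = Y * Y * X := by
  rw [X, Y, ← map_mul, ← map_mul, ← map_mul, ← map_mul]
  apply mkrel
  simp only [map_mul, incl_a1, incl_a2]
  exact ConGen.Rel.of _ _ (Or.inr (Or.inl ⟨1, 2, 2, by decide, le_refl _, rfl, rfl⟩))

lemma B3 : Y * X * Y * X = X * Y * X * Y := by
  rw [X, Y, ← map_mul, ← map_mul, ← map_mul, ← map_mul, ← map_mul, ← map_mul]
  apply mkrel
  simp only [map_mul, incl_a1, incl_a2]
  exact ConGen.Rel.of _ _ (Or.inr (Or.inr (Or.inl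
    ⟨1, 1, 2, 2, le_refl _, by decide, le_refl _, rfl, rfl⟩)))

-- right-associated context versions
lemma b1t (t : HypoN 2) : X*(Y*(X*t)) = Y*(X*(X*t)) := by
  simp only [← mul_assoc]; rw [B1]
lemma b1e : X*(Y*X) = Y*(X*X) := by
  simp only [← mul_assoc]; rw [B1]
lemma b2t (t : HypoN 2) : Y*(X*(Y*t)) = Y*(Y*(X*t)) := by
  simp only [← mul_assoc]; rw [B2]
lemma b2e : Y*(X*Y) = Y*(Y*X) := by
  simp only [← mul_assoc]; rw [B2]
lemma b3t (t : HypoN 2) : Y*(X*(Y*(X*t))) = X*(Y*(X*(Y*t))) := by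
  simp only [← mul_assoc]; rw [B3]
lemma b3e : Y*(X*(Y*X)) = X*(Y*(X*Y)) := by
  simp only [← mul_assoc]; rw [B3]

lemma L1 : X*(Y*X)*X = (Y*X)*X*X := by
  simp only [mul_assoc]; rw [b1t]
lemma L2 : X*(Y*X)*(Y*X) = (Y*X)*X*(Y*X) := by
  simp only [mul_assoc]; rw [← b1t]
lemma L3 : (Y*X)*Y*(Y*X) = Y*(Y*X)*(Y*X) := by
  simp only [mul_assoc]; rw [b2t]
lemma L4 : X*Y*X = Y*X*X := B1
lemma L5 : X*Y*(Y*X) = Y*X*(Y*X) := by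
  simp only [mul_assoc]; rw [← b2e, b3e]
lemma L6 : X*X*(Y*X) = X*(Y*X)*X := by
  simp only [mul_assoc]; rw [b1e]
lemma L7 : (Y*X)*X*(Y*X) = (Y*X)*(Y*X)*X := by
  simp only [mul_assoc]; rw [← b1t, b3t]
lemma L8 : (Y*X)*(Y*X)*Y = (Y*X)*Y*(Y*X) := by
  simp only [mul_assoc]; rw [b2e]
lemma L9 : Y*(Y*X)*Y = Y*Y*(Y*X) := by
  simp only [mul_assoc]; rw [b2e]
lemma L10 : (Y*X)*X*Y = (Y*X)*Y*X := by
  simp only [mul_assoc]; rw [← b1t, b3e]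
lemma L11 : Y*X*Y = Y*Y*X := B2
lemma L12 : (Y*X)*Y*Y = Y*(Y*X)*Y := by
  simp only [mul_assoc]; rw [b2t]

lemma F1 : (Y*X)*X*(Y*X)*X = X*(Y*X)*X*(Y*X) := by
  simp only [mul_assoc]; rw [← b1t, ← b1e]
lemma F2 : (Y*X)*X*Y*X = X*(Y*X)*X*Y := by
  simp only [mul_assoc]; rw [← b1t, ← b1t, b3e]
lemma F3 : Y*X*Y*X = X*Y*X*Y := B3
lemma F4 : (Y*X)*X*(Y*X)*(Y*X) = X*(Y*X)*(Y*X)*(Y*X) := by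
  simp only [mul_assoc]; rw [← b1t]
lemma F5 : (Y*X)*X*Y*(Y*X) = X*(Y*X)*(Y*X)*Y := by
  simp only [mul_assoc]; rw [← b1t, ← b2e]
lemma F6 : Y*X*Y*(Y*X) = X*Y*(Y*X)*Y := by
  simp only [mul_assoc]; rw [← b2e, b3t, ← b2t]
lemma F7 : (Y*X)*(Y*X)*Y*(Y*X) = (Y*X)*(Y*X)*(Y*X)*Y := by
  simp only [mul_assoc]; rw [← b2e]
lemma F8 : Y*(Y*X)*Y*(Y*X) = (Y*X)*Y*(Y*X)*Y := by
  simp only [mul_assoc]; rw [← b2t, ← b2e]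
lemma F9 : (Y*X)*(Y*X)*X*(Y*X) = (Y*X)*(Y*X)*(Y*X)*X := by
  simp only [mul_assoc]; rw [b1e]
lemma F10 : (Y*X)*Y*X*(Y*X) = Y*(Y*X)*(Y*X)*X := by
  simp only [mul_assoc]; rw [← b2t, ← b1e]
lemma F11 : (Y*X)*Y*(Y*X)*(Y*X) = Y*(Y*X)*(Y*X)*(Y*X) := by
  simp only [mul_assoc]; rw [b2t]



lemma phi_of (i j a : Alph) : phi i j (of a) =
    if a = i then X else if a = j then Y else if i < a ∧ a < j then Y*X else 1 := by
  rw [phi, lift_eval_of]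
  simp only [map_mul, X, Y]

lemma zone (i j : Alph) (hij : i < j) (a : Alph) :
    ((a:ℕ) < (i:ℕ) ∧ phi i j (of a) = 1) ∨
    ((a:ℕ) = (i:ℕ) ∧ phi i j (of a) = X) ∨
    (((i:ℕ) < (a:ℕ) ∧ (a:ℕ) < (j:ℕ)) ∧ phi i j (of a) = Y*X) ∨
    ((a:ℕ) = (j:ℕ) ∧ phi i j (of a) = Y) ∨
    ((j:ℕ) < (a:ℕ) ∧ phi i j (of a) = 1) := by
  rcases lt_trichotomy a i with h | h | h
  · exact Or.inl ⟨(PNat.coe_lt_coe _ _).2 h, by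
      rw [phi_of, if_neg h.ne, if_neg (h.trans hij).ne,
        if_neg (fun hh => lt_asymm h hh.1)]⟩
  · exact Or.inr (Or.inl ⟨congrArg _ h, by rw [phi_of, if_pos h]⟩)
  · rcases lt_trichotomy a j with h2 | h2 | h2
    · exact Or.inr (Or.inr (Or.inl ⟨⟨(PNat.coe_lt_coe _ _).2 h, (PNat.coe_lt_coe _ _).2 h2⟩, by
        rw [phi_of, if_neg (ne_of_gt h), if_neg h2.ne, if_pos ⟨h, h2⟩]⟩))
    · exact Or.inr (Or.inr (Or.inr (Or.inl ⟨congrArg _ h2, by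
        rw [phi_of, if_neg (ne_of_gt h), if_pos h2]⟩)))
    · exact Or.inr (Or.inr (Or.inr (Or.inr ⟨(PNat.coe_lt_coe _ _).2 h2, by
        rw [phi_of, if_neg (ne_of_gt h), if_neg (ne_of_gt h2),
          if_neg (fun hh => lt_asymm h2 hh.2)]⟩)))
end PhiAux

namespace PhiAux
set_option maxHeartbeats 4000000 in
set_option linter.unreachableTactic false in
set_option linter.unusedTactic false in
theorem key (i j : Alph) (hij : i < j) : ∀ u v, HypoRel u v → phi i j u = phi i j v := by
  intro u v h
  have hij' : (i:ℕ) < (j:ℕ) := (PNat.coe_lt_coe _ _).2 hij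
  rcases h with ⟨a,b,c,hab,hbc,hu,hv⟩|⟨a,b,c,hab,hbc,hu,hv⟩|⟨a,b,c,d,hab,hbc,hcd,hu,hv⟩|⟨a,b,c,d,hab,hbc,hcd,hu,hv⟩
  · subst hu hv
    have hab' : (a:ℕ) ≤ (b:ℕ) := (PNat.coe_le_coe _ _).2 hab
    have hbc' : (b:ℕ) < (c:ℕ) := (PNat.coe_lt_coe _ _).2 hbc
    simp only [map_mul]
    rcases zone i j hij a with (⟨ha1,ha2⟩|⟨ha1,ha2⟩|⟨ha1,ha2⟩|⟨ha1,ha2⟩|⟨ha1,ha2⟩) <;>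
    rcases zone i j hij b with (⟨hb1,hb2⟩|⟨hb1,hb2⟩|⟨hb1,hb2⟩|⟨hb1,hb2⟩|⟨hb1,hb2⟩) <;>
    rcases zone i j hij c with (⟨hc1,hc2⟩|⟨hc1,hc2⟩|⟨hc1,hc2⟩|⟨hc1,hc2⟩|⟨hc1,hc2⟩) <;>
    rw [ha2, hb2, hc2] <;>
    (try simp only [one_mul, mul_one]) <;>
    first | rfl | omega | exact L1 | exact L2 | exact L3 | exact L4 | exact L5 | exact L6 | exact L7 | exact L8 | exact L9 | exact L10 | exact L11 | exact L12 | exact F1 | exact F2 | exact F3 | exact F4 | exact F5 | exact F6 | exact F7 | exact F8 | exact F9 | exact F10 | exact F11 | exact L1.symm | exact L2.symm | exact L3.symm | exact L4.symm | exact L5.symm | exact L6.symm | exact L7.symm | exact L8.symm | exact L9.symm | exact L10.symm | exact L11.symm | exact L12.symm | exact F1.symm | exact F2.symm | exact F3.symm | exact F4.symm | exact F5.symm | exact F6.symm | exact F7.symm | exact F8.symm | exact F9.symm | exact F10.symm | exact F11.symm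
  · subst hu hv
    have hab' : (a:ℕ) < (b:ℕ) := (PNat.coe_lt_coe _ _).2 hab
    have hbc' : (b:ℕ) ≤ (c:ℕ) := (PNat.coe_le_coe _ _).2 hbc
    simp only [map_mul]
    rcases zone i j hij a with (⟨ha1,ha2⟩|⟨ha1,ha2⟩|⟨ha1,ha2⟩|⟨ha1,ha2⟩|⟨ha1,ha2⟩) <;>
    rcases zone i j hij b with (⟨hb1,hb2⟩|⟨hb1,hb2⟩|⟨hb1,hb2⟩|⟨hb1,hb2⟩|⟨hb1,hb2⟩) <;>
    rcases zone i j hij c with (⟨hc1,hc2⟩|⟨hc1,hc2⟩|⟨hc1,hc2⟩|⟨hc1,hc2⟩|⟨hc1,hc2⟩) <;>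
    rw [ha2, hb2, hc2] <;>
    (try simp only [one_mul, mul_one]) <;>
    first | rfl | omega | exact L1 | exact L2 | exact L3 | exact L4 | exact L5 | exact L6 | exact L7 | exact L8 | exact L9 | exact L10 | exact L11 | exact L12 | exact F1 | exact F2 | exact F3 | exact F4 | exact F5 | exact F6 | exact F7 | exact F8 | exact F9 | exact F10 | exact F11 | exact L1.symm | exact L2.symm | exact L3.symm | exact L4.symm | exact L5.symm | exact L6.symm | exact L7.symm | exact L8.symm | exact L9.symm | exact L10.symm | exact L11.symm | exact L12.symm | exact F1.symm | exact F2.symm | exact F3.symm | exact F4.symm | exact F5.symm | exact F6.symm | exact F7.symm | exact F8.symm | exact F9.symm | exact F10.symm | exact F11.symm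
  · subst hu hv
    have hab' : (a:ℕ) ≤ (b:ℕ) := (PNat.coe_le_coe _ _).2 hab
    have hbc' : (b:ℕ) < (c:ℕ) := (PNat.coe_lt_coe _ _).2 hbc
    have hcd' : (c:ℕ) ≤ (d:ℕ) := (PNat.coe_le_coe _ _).2 hcd
    simp only [map_mul]
    rcases zone i j hij a with (⟨ha1,ha2⟩|⟨ha1,ha2⟩|⟨ha1,ha2⟩|⟨ha1,ha2⟩|⟨ha1,ha2⟩) <;>
    rcases zone i j hij b with (⟨hb1,hb2⟩|⟨hb1,hb2⟩|⟨hb1,hb2⟩|⟨hb1,hb2⟩|⟨hb1,hb2⟩) <;>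
    rcases zone i j hij c with (⟨hc1,hc2⟩|⟨hc1,hc2⟩|⟨hc1,hc2⟩|⟨hc1,hc2⟩|⟨hc1,hc2⟩) <;>
    rcases zone i j hij d with (⟨hd1,hd2⟩|⟨hd1,hd2⟩|⟨hd1,hd2⟩|⟨hd1,hd2⟩|⟨hd1,hd2⟩) <;>
    rw [ha2, hb2, hc2, hd2] <;>
    (try simp only [one_mul, mul_one]) <;>
    first | rfl | omega | exact L1 | exact L2 | exact L3 | exact L4 | exact L5 | exact L6 | exact L7 | exact L8 | exact L9 | exact L10 | exact L11 | exact L12 | exact F1 | exact F2 | exact F3 | exact F4 | exact F5 | exact F6 | exact F7 | exact F8 | exact F9 | exact F10 | exact F11 | exact L1.symm | exact L2.symm | exact L3.symm | exact L4.symm | exact L5.symm | exact L6.symm | exact L7.symm | exact L8.symm | exact L9.symm | exact L10.symm | exact L11.symm | exact L12.symm | exact F1.symm | exact F2.symm | exact F3.symm | exact F4.symm | exact F5.symm | exact F6.symm | exact F7.symm | exact F8.symm | exact F9.symm | exact F10.symm | exact F11.symm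
  · subst hu hv
    have hab' : (a:ℕ) < (b:ℕ) := (PNat.coe_lt_coe _ _).2 hab
    have hbc' : (b:ℕ) ≤ (c:ℕ) := (PNat.coe_le_coe _ _).2 hbc
    have hcd' : (c:ℕ) < (d:ℕ) := (PNat.coe_lt_coe _ _).2 hcd
    simp only [map_mul]
    rcases zone i j hij a with (⟨ha1,ha2⟩|⟨ha1,ha2⟩|⟨ha1,ha2⟩|⟨ha1,ha2⟩|⟨ha1,ha2⟩) <;>
    rcases zone i j hij b with (⟨hb1,hb2⟩|⟨hb1,hb2⟩|⟨hb1,hb2⟩|⟨hb1,hb2⟩|⟨hb1,hb2⟩) <;>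
    rcases zone i j hij c with (⟨hc1,hc2⟩|⟨hc1,hc2⟩|⟨hc1,hc2⟩|⟨hc1,hc2⟩|⟨hc1,hc2⟩) <;>
    rcases zone i j hij d with (⟨hd1,hd2⟩|⟨hd1,hd2⟩|⟨hd1,hd2⟩|⟨hd1,hd2⟩|⟨hd1,hd2⟩) <;>
    rw [ha2, hb2, hc2, hd2] <;>
    (try simp only [one_mul, mul_one]) <;>
    first | rfl | omega | exact L1 | exact L2 | exact L3 | exact L4 | exact L5 | exact L6 | exact L7 | exact L8 | exact L9 | exact L10 | exact L11 | exact L12 | exact F1 | exact F2 | exact F3 | exact F4 | exact F5 | exact F6 | exact F7 | exact F8 | exact F9 | exact F10 | exact F11 | exact L1.symm | exact L2.symm | exact L3.symm | exact L4.symm | exact L5.symm | exact L6.symm | exact L7.symm | exact L8.symm | exact L9.symm | exact L10.symm | exact L11.symm | exact L12.symm | exact F1.symm | exact F2.symm | exact F3.symm | exact F4.symm | exact F5.symm | exact F6.symm | exact F7.symm | exact F8.symm | exact F9.symm | exact F10.symm | exact F11.symm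
end PhiAux

/-- For `i < j` in `A`, if `u ≡_hypo v` then `φ_{ij}(u) = φ_{ij}(v)`; consequently
`φ_{ij}` factors through the quotient, giving a monoid homomorphism `hypo → hypo_2`. -/
theorem phi_factors (i j : Alph) (hij : i < j) :
    (∀ u v : FreeMonoid Alph, hypoCon u v → phi i j u = phi i j v) ∧
    ∃ g : Hypo →* HypoN 2, ∀ w : FreeMonoid Alph, g (hypoCon.mk' w) = phi i j w := by
  have hle : hypoCon ≤ Con.ker (phi i j) :=
    Con.conGen_le.mpr (fun u v h => (Con.ker_rel _).mpr (PhiAux.key i j hij u v h))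
  exact ⟨fun u v h => (Con.ker_rel _).mp (hle h),
    hypoCon.lift (phi i j) hle, fun w => Con.lift_coe hle w⟩
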